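/- Let n ∈ ℕ, let Φ : ℝ^n → ℝ be twice continuously differentiable and convex with a nonempty set of minimizers, and let α, β > 0. Let x : ℝ → ℝ^n be twice differentiable and satisfy, for all t ≥ 0, x''(t) + α·x'(t) + β·(D(∇Φ)(x(t)))(x'(t)) + ∇Φ(x(t)) = 0, and assume there exists R > 0 with ‖x(t)‖ ≤ R and ‖x'(t)‖ ≤ R for all t ≥ 0. Then for every minimizer z of Φ, the limit lim_{t→∞} ‖x(t) - z‖ exists. -/

import Mathlib

open Filter MeasureTheory

open Filter Set

/-- antitone on [0,∞) and bounded below ⇒ converges at infinity -/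
lemma auxP_anti_tendsto {f : ℝ → ℝ} {b : ℝ} (hf : AntitoneOn f (Ici 0))
    (hb : ∀ t, 0 ≤ t → b ≤ f t) : ∃ l, Tendsto f atTop (nhds l) := by
  set g : ℝ → ℝ := fun t => f (max t 0) with hg
  have hga : Antitone g := fun s t hst => hf (mem_Ici.2 (le_max_right _ _)) (mem_Ici.2 (le_max_right _ _))
    (max_le_max hst le_rfl)
  have hgb : BddBelow (range g) := ⟨b, by rintro y ⟨t, rfl⟩; exact hb _ (le_max_right _ _)⟩
  refine ⟨_, (tendsto_atTop_ciInf hga hgb).congr' ?_⟩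
  filter_upwards [eventually_ge_atTop (0:ℝ)] with t ht
  simp [hg, max_eq_left ht]

lemma auxP_mono_tendsto {f : ℝ → ℝ} {b : ℝ} (hf : MonotoneOn f (Ici 0))
    (hb : ∀ t, 0 ≤ t → f t ≤ b) : ∃ l, Tendsto f atTop (nhds l) := by
  obtain ⟨l, hl⟩ := auxP_anti_tendsto (f := fun t => -f t) (b := -b)
    (fun s hs t ht hst => neg_le_neg (hf hs ht hst)) (fun t ht => neg_le_neg (hb t ht))
  exact ⟨-l, by simpa using hl.neg⟩

lemma auxP_antiOn {f f' : ℝ → ℝ} {s : Set ℝ} (hs : Convex ℝ s)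
    (hd : ∀ t, HasDerivAt f (f' t) t) (h0 : ∀ t ∈ interior s, f' t ≤ 0) :
    AntitoneOn f s := by
  refine antitoneOn_of_deriv_nonpos hs (fun t _ => (hd t).continuousAt.continuousWithinAt)
    (fun t _ => ((hd t).differentiableAt).differentiableWithinAt) (fun t ht => ?_)
  rw [(hd t).deriv]; exact h0 t ht

lemma auxP_monoOn {f f' : ℝ → ℝ} {s : Set ℝ} (hs : Convex ℝ s)
    (hd : ∀ t, HasDerivAt f (f' t) t) (h0 : ∀ t ∈ interior s, 0 ≤ f' t) :
    MonotoneOn f s := by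
  refine monotoneOn_of_deriv_nonneg hs (fun t _ => (hd t).continuousAt.continuousWithinAt)
    (fun t _ => ((hd t).differentiableAt).differentiableWithinAt) (fun t ht => ?_)
  rw [(hd t).deriv]; exact h0 t ht

/-- If `h' + α h → c` with `α > 0`, then `h → c/α`. -/
lemma auxP_ode {h h' : ℝ → ℝ} {α c : ℝ} (hα : 0 < α)
    (hd : ∀ t, HasDerivAt h (h' t) t)
    (hlim : Tendsto (fun t => h' t + α * h t) atTop (nhds c)) :
    Tendsto h atTop (nhds (c / α)) := by
  rw [Metric.tendsto_atTop] at hlim ⊢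
  intro ε hε
  obtain ⟨T, hT⟩ := hlim (α * ε / 4) (by positivity)
  -- v t = (h t - c/α) * exp (α t)
  set v : ℝ → ℝ := fun t => (h t - c / α) * Real.exp (α * t) with hv
  have hde : ∀ t : ℝ, HasDerivAt (fun t => Real.exp (α * t)) (α * Real.exp (α * t)) t := by
    intro t
    have := (Real.hasDerivAt_exp (α * t)).comp t ((hasDerivAt_id t).const_mul α)
    simpa [mul_comm, Function.comp_def] using this
  have hdv : ∀ t : ℝ, HasDerivAt v ((h' t + α * h t - c) * Real.exp (α * t)) t := by
    intro t
    have := ((hd t).sub_const (c / α)).mul (hde t)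
    have hc : h' t * Real.exp (α * t) + (h t - c / α) * (α * Real.exp (α * t))
        = (h' t + α * h t - c) * Real.exp (α * t) := by
      field_simp
      ring
    rw [hc] at this
    exact this
  -- upper/lower comparisons on [T, ∞)
  have hub : AntitoneOn (fun t => v t - ε / 4 * Real.exp (α * t)) (Ici T) := by
    refine auxP_antiOn (convex_Ici T)
      (fun t => (hdv t).sub ((hde t).const_mul (ε / 4))) (fun t ht => ?_)
    rw [interior_Ici] at ht
    have h1 := hT t (le_of_lt ht)
    rw [Real.dist_eq] at h1
    have h2 : h' t + α * h t - c ≤ α * ε / 4 := by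
      have := abs_le.1 h1.le
      linarith [this.2]
    have h3 : (0:ℝ) < Real.exp (α * t) := Real.exp_pos _
    nlinarith
  have hlb : MonotoneOn (fun t => v t + ε / 4 * Real.exp (α * t)) (Ici T) := by
    refine auxP_monoOn (convex_Ici T)
      (fun t => (hdv t).add ((hde t).const_mul (ε / 4))) (fun t ht => ?_)
    rw [interior_Ici] at ht
    have h1 := hT t (le_of_lt ht)
    rw [Real.dist_eq] at h1
    have h2 : -(α * ε / 4) ≤ h' t + α * h t - c := by
      have := abs_le.1 h1.le
      linarith [this.1]
    have h3 : (0:ℝ) < Real.exp (α * t) := Real.exp_pos _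
    nlinarith
  -- choose N so that the exponential tail is small
  have htail : Tendsto (fun t : ℝ => (|v T| + ε / 4 * Real.exp (α * T)) * Real.exp (-(α * t)))
      atTop (nhds 0) := by
    have : Tendsto (fun t : ℝ => Real.exp (-(α * t))) atTop (nhds 0) := by
      have h0 : Tendsto (fun t : ℝ => α * t) atTop atTop :=
        Tendsto.const_mul_atTop hα tendsto_id
      exact (Real.tendsto_exp_neg_atTop_nhds_zero.comp h0)
    simpa using this.const_mul (|v T| + ε / 4 * Real.exp (α * T))
  rw [Metric.tendsto_atTop] at htail
  obtain ⟨N₀, hN₀⟩ := htail (ε / 4) (by positivity)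
  refine ⟨max T N₀, fun t ht => ?_⟩
  have htT : T ≤ t := le_trans (le_max_left _ _) ht
  have htN : N₀ ≤ t := le_trans (le_max_right _ _) ht
  have hexp : (0:ℝ) < Real.exp (α * t) := Real.exp_pos _
  have h1 : v t - ε / 4 * Real.exp (α * t) ≤ v T - ε / 4 * Real.exp (α * T) :=
    hub self_mem_Ici htT htT
  have h2 : v T + ε / 4 * Real.exp (α * T) ≤ v t + ε / 4 * Real.exp (α * t) :=
    hlb self_mem_Ici htT htT
  -- so |v t| ≤ |v T| + ε/4 exp(αT) + ε/4 exp(αt)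
  have hexpT : (0:ℝ) < Real.exp (α * T) := Real.exp_pos _
  have hvt : |h t - c / α| ≤ (|v T| + ε / 4 * Real.exp (α * T)) * Real.exp (-(α * t)) + ε / 4 := by
    have hvle : v t ≤ |v T| + ε / 4 * Real.exp (α * T) + ε / 4 * Real.exp (α * t) := by
      have := le_abs_self (v T)
      nlinarith
    have hvge : -(|v T| + ε / 4 * Real.exp (α * T)) - ε / 4 * Real.exp (α * t) ≤ v t := by
      have := neg_abs_le (v T)
      nlinarith
    have hveq : h t - c / α = v t * Real.exp (-(α * t)) := by
      rw [hv]
      simp [Real.exp_neg, mul_assoc, mul_inv_cancel₀ (ne_of_gt hexp)]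
    rw [hveq, abs_le]
    have hexpn : (0:ℝ) < Real.exp (-(α * t)) := Real.exp_pos _
    have hee : Real.exp (α * t) * Real.exp (-(α * t)) = 1 := by
      rw [← Real.exp_add]; simp
    constructor
    · nlinarith
    · nlinarith
  have h3 := hN₀ t htN
  rw [Real.dist_eq, sub_zero] at h3
  have h4 : (|v T| + ε / 4 * Real.exp (α * T)) * Real.exp (-(α * t)) < ε / 4 :=
    lt_of_abs_lt h3
  rw [Real.dist_eq]
  calc |h t - c / α| ≤ _ := hvt
    _ < ε / 4 + ε / 4 := by linarith
    _ < ε := by linarith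

/-- Barbalat-type lemma: nonnegative, derivative-bounded `p` whose primitive converges
tends to zero. -/
lemma auxP_barbalat {p p' P : ℝ → ℝ} {M S : ℝ} (hM : 0 < M)
    (hp0 : ∀ t, 0 ≤ p t)
    (hdp : ∀ t, HasDerivAt p (p' t) t)
    (hpb : ∀ t, 0 ≤ t → |p' t| ≤ M)
    (hdP : ∀ t, HasDerivAt P (p t) t)
    (hPlim : Tendsto P atTop (nhds S)) :
    Tendsto p atTop (nhds 0) := by
  rw [Metric.tendsto_atTop] at hPlim ⊢
  intro ε hε
  set δ := ε / (2 * M) with hδdef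
  have hδ : 0 < δ := by positivity
  have mono1 : MonotoneOn (fun u => p u + M * u) (Ici 0) := by
    refine auxP_monoOn (convex_Ici 0) (fun u => (hdp u).add ((hasDerivAt_id u).const_mul M))
      (fun u hu => ?_)
    rw [interior_Ici] at hu
    have := abs_le.1 (hpb u (le_of_lt hu))
    simp only [mul_one]
    linarith [this.1]
  have key : ∀ t : ℝ, 0 ≤ t → (p t - M * δ) * δ ≤ P (t + δ) - P t := by
    intro t ht
    have monoQ : MonotoneOn (fun u => P u - (p t - M * δ) * u) (Icc t (t + δ)) := by
      refine auxP_monoOn (convex_Icc _ _)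
        (fun u => (hdP u).sub ((hasDerivAt_id u).const_mul (p t - M * δ))) (fun u hu => ?_)
      rw [interior_Icc] at hu
      have hut : t ≤ u := hu.1.le
      have hud : u ≤ t + δ := hu.2.le
      have h1 : p t + M * t ≤ p u + M * u :=
        mono1 (by exact ht) (by exact le_trans ht hut) hut
      simp only [mul_one]
      nlinarith
    have hmem1 : t ∈ Icc t (t + δ) := ⟨le_rfl, by linarith⟩
    have hmem2 : t + δ ∈ Icc t (t + δ) := ⟨by linarith, le_rfl⟩
    have h2 := monoQ hmem1 hmem2 (by linarith)
    simp only at h2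
    nlinarith
  obtain ⟨N₁, hN₁⟩ := hPlim (ε * δ / 8) (by positivity)
  refine ⟨max N₁ 0, fun t ht => ?_⟩
  have ht0 : 0 ≤ t := le_trans (le_max_right _ _) ht
  have htN : N₁ ≤ t := le_trans (le_max_left _ _) ht
  have h1 := hN₁ t htN
  have h2 := hN₁ (t + δ) (by linarith)
  rw [Real.dist_eq] at h1 h2
  have h3 : P (t + δ) - P t < ε * δ / 4 := by
    have := abs_lt.1 h1
    have := abs_lt.1 h2
    cases abs_lt.1 h1 with | intro a b => cases abs_lt.1 h2 with | intro c d => linarith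
  have h4 := key t ht0
  have hMδ : M * δ = ε / 2 := by
    rw [hδdef]; field_simp
  have h5 : p t < ε := by nlinarith
  rw [Real.dist_eq, sub_zero, abs_of_nonneg (hp0 t)]
  exact h5

open RealInnerProductSpace in
/-- First-order condition for a differentiable convex function. -/
lemma auxP_conv {E : Type*} [NormedAddCommGroup E] [InnerProductSpace ℝ E] [CompleteSpace E]
    {f : E → ℝ} (hconv : ConvexOn ℝ Set.univ f) (hd : Differentiable ℝ f) (a b : E) :
    f a + ⟪gradient f a, b - a⟫ ≤ f b := by
  set c : ℝ → E := fun s => a + s • (b - a) with hc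
  have hdc : ∀ s : ℝ, HasDerivAt c (b - a) s := by
    intro s
    have := ((hasDerivAt_id s).smul_const (b - a)).const_add a
    simpa [hc] using this
  have hψd : ∀ s : ℝ, HasDerivAt (fun s => f (c s)) ⟪gradient f (c s), b - a⟫ s := by
    intro s
    have h1 := ((hd (c s)).hasGradientAt.hasFDerivAt).comp_hasDerivAt s (hdc s)
    simpa [InnerProductSpace.toDual_apply_apply, Function.comp_def] using h1
  have hψc : ConvexOn ℝ Set.univ (fun s => f (c s)) := by
    have h2 := hconv.comp_affineMap (AffineMap.lineMap a b : ℝ →ᵃ[ℝ] E)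
    have h3 : (AffineMap.lineMap a b : ℝ →ᵃ[ℝ] E) ⁻¹' Set.univ = Set.univ := by simp
    rw [h3] at h2
    rw [show (fun s => f (c s)) = f ∘ (AffineMap.lineMap a b : ℝ →ᵃ[ℝ] E) from ?_]
    · exact h2
    funext s
    simp [hc, AffineMap.lineMap_apply, Function.comp, add_comm]
  have hsl := hψc.le_slope_of_hasDerivAt (Set.mem_univ (0:ℝ)) (Set.mem_univ (1:ℝ))
    zero_lt_one (hψd 0)
  have hc0 : c 0 = a := by simp [hc]
  have hc1 : c 1 = b := by simp [hc]
  rw [slope_def_field, hc0, hc1] at hsl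
  norm_num at hsl
  have hgi : ⟪gradient f a, b - a⟫ = (fderiv ℝ f a) b - (fderiv ℝ f a) a := by
    rw [gradient, InnerProductSpace.toDual_symm_apply, map_sub]
  linarith

open RealInnerProductSpace in
/-- Positive semidefiniteness of the Hessian of a convex function. -/
lemma auxP_hess {E : Type*} [NormedAddCommGroup E] [InnerProductSpace ℝ E] [CompleteSpace E]
    {f : E → ℝ} (hconv : ConvexOn ℝ Set.univ f) (hd : Differentiable ℝ f)
    (hg : Differentiable ℝ (gradient f)) (y v : E) :
    0 ≤ ⟪(fderiv ℝ (gradient f) y) v, v⟫ := by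
  set c : ℝ → E := fun s => y + s • v with hc
  have hdc : ∀ s : ℝ, HasDerivAt c v s := by
    intro s
    have := ((hasDerivAt_id s).smul_const v).const_add y
    simpa [hc] using this
  set q : ℝ → ℝ := fun s => ⟪gradient f (c s), v⟫ with hq
  have hdq : HasDerivAt q ⟪(fderiv ℝ (gradient f) y) v, v⟫ 0 := by
    have hG : HasDerivAt (fun s => gradient f (c s)) ((fderiv ℝ (gradient f) (c 0)) v) 0 :=
      (hg (c 0)).hasFDerivAt.comp_hasDerivAt 0 (hdc 0)
    have h2 := hG.inner ℝ (hasDerivAt_const (0:ℝ) v)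
    have hc0 : c 0 = y := by simp [hc]
    simpa [hc0, hq] using h2
  have hmono : Monotone q := by
    intro s t hst
    rcases eq_or_lt_of_le hst with rfl | hlt
    · exact le_rfl
    · have h1 := auxP_conv hconv hd (c s) (c t)
      have h2 := auxP_conv hconv hd (c t) (c s)
      have hsub : c t - c s = (t - s) • v := by
        simp only [hc, sub_smul]
        abel
      have hsub' : c s - c t = -((t - s) • v) := by rw [← hsub]; abel
      rw [hsub] at h1
      rw [hsub'] at h2
      rw [real_inner_smul_right] at h1
      rw [inner_neg_right, real_inner_smul_right] at h2
      have h4 : 0 < t - s := by linarith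
      simp only [hq]
      nlinarith [h1, h2, h4]
  -- derivative of a monotone function is nonnegative
  have hslope := hasDerivAt_iff_tendsto_slope.1 hdq
  refine ge_of_tendsto hslope ?_
  filter_upwards [self_mem_nhdsWithin] with s hs
  rcases lt_or_gt_of_ne (Set.mem_compl_singleton_iff.1 hs) with h | h
  · rw [slope_def_field]
    rw [div_nonneg_iff]
    right
    constructor
    · simpa using hmono h.le
    · linarith
  · rw [slope_def_field]
    apply div_nonneg
    · simpa using hmono h.le
    · linarith

lemma auxP_ftc {f : ℝ → ℝ} (hf : Continuous f) (t : ℝ) :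
    HasDerivAt (fun u => ∫ s in (0:ℝ)..u, f s) (f t) t :=
  intervalIntegral.integral_hasDerivAt_right (hf.intervalIntegrable _ _)
    (hf.stronglyMeasurableAtFilter _ _) hf.continuousAt

open RealInnerProductSpace

theorem stmt_17 {n : ℕ} (Φ : EuclideanSpace ℝ (Fin n) → ℝ) (hΦ : ContDiff ℝ 2 Φ)
    (hconv : ConvexOn ℝ Set.univ Φ)
    (hmin : ∃ z, ∀ y, Φ z ≤ Φ y)
    (α β : ℝ) (hα : 0 < α) (hβ : 0 < β)
    (x x' x'' : ℝ → EuclideanSpace ℝ (Fin n))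
    (hx : ∀ t : ℝ, HasDerivAt x (x' t) t)
    (hx' : ∀ t : ℝ, HasDerivAt x' (x'' t) t)
    (heq : ∀ t : ℝ, 0 ≤ t →
      x'' t + α • x' t + β • (fderiv ℝ (gradient Φ) (x t)) (x' t) + gradient Φ (x t) = 0)
    (R : ℝ) (hR : 0 < R)
    (hxb : ∀ t : ℝ, 0 ≤ t → ‖x t‖ ≤ R)
    (hx'b : ∀ t : ℝ, 0 ≤ t → ‖x' t‖ ≤ R) :
    ∀ z : EuclideanSpace ℝ (Fin n), (∀ y, Φ z ≤ Φ y) →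
      ∃ l : ℝ, Tendsto (fun t => ‖x t - z‖) atTop (nhds l) := by
  intro z hz
  -- regularity of Φ and its gradient
  have hΦd : Differentiable ℝ Φ := hΦ.differentiable (by norm_num)
  have hgrad1 : ContDiff ℝ 1 (gradient Φ) := by
    have hf : ContDiff ℝ 1 (fderiv ℝ Φ) := hΦ.fderiv_right (by norm_num)
    exact (InnerProductSpace.toDual ℝ (EuclideanSpace ℝ (Fin n))).symm.contDiff.comp hf
  have hgd : Differentiable ℝ (gradient Φ) := hgrad1.differentiable one_ne_zero
  have hHcont : Continuous (fun y => fderiv ℝ (gradient Φ) y) :=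
    hgrad1.continuous_fderiv one_ne_zero
  -- abbreviations
  set G : ℝ → EuclideanSpace ℝ (Fin n) := fun t => gradient Φ (x t) with hGdef
  set H : ℝ → (EuclideanSpace ℝ (Fin n) →L[ℝ] EuclideanSpace ℝ (Fin n)) := fun t => fderiv ℝ (gradient Φ) (x t) with hHdef
  set dd : ℝ → EuclideanSpace ℝ (Fin n) := fun t => x t - z with hdddef
  set hh : ℝ → ℝ := fun t => ⟪dd t, dd t⟫ / 2 with hhhdef
  set hh1 : ℝ → ℝ := fun t => ⟪x' t, dd t⟫ with hhh1def
  set gg : ℝ → ℝ := fun t => ⟪G t, dd t⟫ with hggdef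
  set ff : ℝ → ℝ := fun t => Φ (x t) - Φ z with hffdef
  set pp : ℝ → ℝ := fun t => gg t - ff t with hppdef
  set En : ℝ → ℝ := fun t => ⟪x' t, x' t⟫ / 2 + Φ (x t) with hEndef
  -- continuity facts
  have hxc : Continuous x := continuous_iff_continuousAt.2 fun t => (hx t).continuousAt
  have hx'c : Continuous x' := continuous_iff_continuousAt.2 fun t => (hx' t).continuousAt
  have hGc : Continuous G := hgrad1.continuous.comp hxc
  have hddc : Continuous dd := hxc.sub continuous_const
  have hppc : Continuous pp := ((hGc.inner hddc)).sub ((hΦ.continuous.comp hxc).sub continuous_const)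
  have hx2c : Continuous (fun t => ⟪x' t, x' t⟫) := hx'c.inner hx'c
  -- derivatives
  have hd_dd : ∀ t : ℝ, HasDerivAt dd (x' t) t := fun t => (hx t).sub_const z
  have hd_hh : ∀ t : ℝ, HasDerivAt hh (hh1 t) t := by
    intro t
    have h1 := ((hd_dd t).inner ℝ (hd_dd t)).div_const 2
    have h2 : (⟪dd t, x' t⟫ + ⟪x' t, dd t⟫) / 2 = hh1 t := by
      simp only [hhh1def]
      rw [real_inner_comm (dd t) (x' t)]; ring
    rw [h2] at h1
    exact h1
  have hd_hh1 : ∀ t : ℝ, HasDerivAt hh1 (⟪x' t, x' t⟫ + ⟪x'' t, dd t⟫) t := by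
    intro t
    exact (hx' t).inner ℝ (hd_dd t)
  have hd_G : ∀ t : ℝ, HasDerivAt G (H t (x' t)) t := fun t =>
    (hgd (x t)).hasFDerivAt.comp_hasDerivAt t (hx t)
  have hd_Φx : ∀ t : ℝ, HasDerivAt (fun t => Φ (x t)) ⟪G t, x' t⟫ t := by
    intro t
    have h1 := ((hΦd (x t)).hasGradientAt.hasFDerivAt).comp_hasDerivAt t (hx t)
    simpa [InnerProductSpace.toDual_apply_apply, Function.comp_def, hGdef] using h1
  have hd_ff : ∀ t : ℝ, HasDerivAt ff ⟪G t, x' t⟫ t := fun t => (hd_Φx t).sub_const (Φ z)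
  have hd_gg : ∀ t : ℝ, HasDerivAt gg (⟪G t, x' t⟫ + ⟪H t (x' t), dd t⟫) t := fun t =>
    (hd_G t).inner ℝ (hd_dd t)
  have hd_pp : ∀ t : ℝ, HasDerivAt pp ⟪H t (x' t), dd t⟫ t := by
    intro t
    have := (hd_gg t).sub (hd_ff t)
    rw [add_sub_cancel_left] at this
    exact this
  have hd_En : ∀ t : ℝ, HasDerivAt En (⟪x'' t, x' t⟫ + ⟪G t, x' t⟫) t := by
    intro t
    have h1 := ((hx' t).inner ℝ (hx' t)).div_const 2
    have h2 : (⟪x' t, x'' t⟫ + ⟪x'' t, x' t⟫) / 2 = ⟪x'' t, x' t⟫ := by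
      rw [real_inner_comm (x' t) (x'' t)]; ring
    rw [h2] at h1
    exact h1.add (hd_Φx t)
  -- the ODE, rearranged
  have hxdd : ∀ t : ℝ, 0 ≤ t → x'' t = -(α • x' t + β • H t (x' t) + G t) := by
    intro t ht
    have h0 := heq t ht
    have h1 : x'' t + (α • x' t + β • H t (x' t) + G t) = 0 := by
      simp only [hHdef, hGdef]
      rw [← h0]; abel
    exact eq_neg_of_add_eq_zero_left h1
  have hinner : ∀ t : ℝ, 0 ≤ t → ∀ w : EuclideanSpace ℝ (Fin n),
      ⟪x'' t, w⟫ = -(α * ⟪x' t, w⟫ + β * ⟪H t (x' t), w⟫ + ⟪G t, w⟫) := by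
    intro t ht w
    rw [hxdd t ht]
    simp [inner_add_left, real_inner_smul_left, inner_neg_left, Finset.mul_sum, mul_assoc]
  -- convexity facts
  have hff0 : ∀ t : ℝ, 0 ≤ ff t := fun t => sub_nonneg.2 (hz (x t))
  have hffgg : ∀ t : ℝ, ff t ≤ gg t := by
    intro t
    have h1 := auxP_conv hconv hΦd (x t) z
    have h2 : ⟪gradient Φ (x t), z - x t⟫ = -gg t := by
      rw [hggdef]
      simp only [hGdef, hdddef]
      rw [← neg_sub (x t) z, inner_neg_right]
    rw [h2] at h1
    simp only [hffdef]
    linarith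
  have hpp0 : ∀ t : ℝ, 0 ≤ pp t := fun t => sub_nonneg.2 (hffgg t)
  have hgg0 : ∀ t : ℝ, 0 ≤ gg t := fun t => le_trans (hff0 t) (hffgg t)
  have hhess : ∀ (t : ℝ) (v : EuclideanSpace ℝ (Fin n)), 0 ≤ ⟪H t v, v⟫ := by
    intro t v
    exact auxP_hess hconv hΦd hgd (x t) v
  have hhh0 : ∀ t : ℝ, 0 ≤ hh t := fun t => by
    simp only [hhhdef]
    exact div_nonneg real_inner_self_nonneg (by norm_num)
  have hxx0 : ∀ t : ℝ, 0 ≤ ⟪x' t, x' t⟫ := fun t => real_inner_self_nonneg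
  -- bounds on the compact ball
  obtain ⟨Mg, hMg⟩ := (isCompact_closedBall (0 : EuclideanSpace ℝ (Fin n)) R).exists_bound_of_continuousOn
    (hgrad1.continuous.continuousOn)
  obtain ⟨MH, hMH⟩ := (isCompact_closedBall (0 : EuclideanSpace ℝ (Fin n)) R).exists_bound_of_continuousOn
    (hHcont.continuousOn)
  have hmem : ∀ t : ℝ, 0 ≤ t → x t ∈ Metric.closedBall (0 : EuclideanSpace ℝ (Fin n)) R := by
    intro t ht
    rw [Metric.mem_closedBall, dist_zero_right]
    exact hxb t ht
  have hMH0 : 0 ≤ MH := le_trans (norm_nonneg _) (hMH 0 (Metric.mem_closedBall_self hR.le))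
  have hMg0 : 0 ≤ Mg := le_trans (norm_nonneg _) (hMg 0 (Metric.mem_closedBall_self hR.le))
  set Rz : ℝ := R + ‖z‖ with hRzdef
  have hRz0 : 0 < Rz := by positivity
  have hddb : ∀ t : ℝ, 0 ≤ t → ‖dd t‖ ≤ Rz := by
    intro t ht
    calc ‖dd t‖ ≤ ‖x t‖ + ‖z‖ := norm_sub_le _ _
      _ ≤ Rz := by have := hxb t ht; rw [hRzdef]; linarith
  have hGb : ∀ t : ℝ, 0 ≤ t → ‖G t‖ ≤ Mg := fun t ht => hMg (x t) (hmem t ht)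
  have hHb : ∀ t : ℝ, 0 ≤ t → ‖H t (x' t)‖ ≤ MH * R := by
    intro t ht
    calc ‖H t (x' t)‖ ≤ ‖H t‖ * ‖x' t‖ := (H t).le_opNorm _
      _ ≤ MH * R := by
          have h1 := hMH (x t) (hmem t ht)
          have h2 := hx'b t ht
          exact mul_le_mul h1 h2 (norm_nonneg _) hMH0
  have hhh1b : ∀ t : ℝ, 0 ≤ t → |hh1 t| ≤ R * Rz := by
    intro t ht
    calc |hh1 t| ≤ ‖x' t‖ * ‖dd t‖ := abs_real_inner_le_norm _ _
      _ ≤ R * Rz := mul_le_mul (hx'b t ht) (hddb t ht) (norm_nonneg _) hR.le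
  have hppb' : ∀ t : ℝ, 0 ≤ t → |⟪H t (x' t), dd t⟫| ≤ MH * R * Rz := by
    intro t ht
    calc |⟪H t (x' t), dd t⟫| ≤ ‖H t (x' t)‖ * ‖dd t‖ := abs_real_inner_le_norm _ _
      _ ≤ MH * R * Rz := mul_le_mul (hHb t ht) (hddb t ht) (norm_nonneg _)
          (by positivity)
  -- energy decay : A is bounded
  set A : ℝ → ℝ := fun t => ∫ s in (0:ℝ)..t, ⟪x' s, x' s⟫ with hAdef
  have hd_A : ∀ t : ℝ, HasDerivAt A (⟪x' t, x' t⟫) t := auxP_ftc hx2c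
  have hA0 : A 0 = 0 := by simp [hAdef]
  have hWanti : AntitoneOn (fun t => α * A t + En t) (Set.Ici (0:ℝ)) := by
    refine auxP_antiOn (convex_Ici 0)
      (fun t => ((hd_A t).const_mul α).add (hd_En t)) (fun t ht => ?_)
    rw [interior_Ici] at ht
    have h1 := hinner t ht.le (x' t)
    rw [h1]
    have h2 := hhess t (x' t)
    nlinarith [hβ, hα]
  have hEnlb : ∀ t : ℝ, Φ z ≤ En t := by
    intro t
    simp only [hEndef]
    have := hz (x t)
    have := hxx0 t
    linarith
  set CA : ℝ := (En 0 - Φ z) / α with hCAdef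
  have hAb : ∀ t : ℝ, 0 ≤ t → A t ≤ CA := by
    intro t ht
    have h1 : α * A t + En t ≤ α * A 0 + En 0 := hWanti (Set.self_mem_Ici) ht ht
    have h2 := hEnlb t
    rw [hA0] at h1
    rw [hCAdef, le_div_iff₀ hα]
    nlinarith
  have hAmono : MonotoneOn A (Set.Ici (0:ℝ)) :=
    auxP_monoOn (convex_Ici 0) hd_A (fun t _ => hxx0 t)
  obtain ⟨lA, hlA⟩ := auxP_mono_tendsto hAmono hAb
  -- the Lyapunov-type functional F
  set F : ℝ → ℝ := fun t => hh1 t + α * hh t + β * pp t with hFdef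
  have hd_F : ∀ t : ℝ, HasDerivAt F
      ((⟪x' t, x' t⟫ + ⟪x'' t, dd t⟫) + α * hh1 t + β * ⟪H t (x' t), dd t⟫) t := by
    intro t
    exact ((hd_hh1 t).add ((hd_hh t).const_mul α)).add ((hd_pp t).const_mul β)
  have hF' : ∀ t : ℝ, 0 ≤ t →
      (⟪x' t, x' t⟫ + ⟪x'' t, dd t⟫) + α * hh1 t + β * ⟪H t (x' t), dd t⟫
        = ⟪x' t, x' t⟫ - gg t := by
    intro t ht
    have h1 := hinner t ht (dd t)
    rw [h1]
    simp only [hhh1def, hggdef]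
    ring
  have hFlb : ∀ t : ℝ, 0 ≤ t → -(R * Rz) ≤ F t := by
    intro t ht
    have h1 := hhh1b t ht
    have h2 := abs_le.1 h1
    have h3 := mul_nonneg hα.le (hhh0 t)
    have h4 := mul_nonneg hβ.le (hpp0 t)
    simp only [hFdef]
    linarith
  have hFAanti : AntitoneOn (fun t => F t - A t) (Set.Ici (0:ℝ)) := by
    refine auxP_antiOn (convex_Ici 0) (fun t => (hd_F t).sub (hd_A t)) (fun t ht => ?_)
    rw [interior_Ici] at ht
    rw [hF' t ht.le]
    have := hgg0 t
    linarith
  obtain ⟨l1, hl1⟩ := auxP_anti_tendsto hFAanti (b := -(R * Rz) - CA)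
    (fun t ht => by
      have h1 := hFlb t ht
      have h2 := hAb t ht
      show -(R * Rz) - CA ≤ F t - A t
      linarith)
  have hFlim : Tendsto F atTop (nhds (l1 + lA)) := by
    have h1 := hl1.add hlA
    have h2 : (fun t => (F t - A t) + A t) = F := by funext t; ring
    rwa [h2] at h1
  -- the primitive of pp converges
  set P : ℝ → ℝ := fun t => ∫ s in (0:ℝ)..t, pp s with hPdef
  have hd_P : ∀ t : ℝ, HasDerivAt P (pp t) t := auxP_ftc hppc
  have hP0 : P 0 = 0 := by simp [hPdef]
  have hPmono : MonotoneOn P (Set.Ici (0:ℝ)) :=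
    auxP_monoOn (convex_Ici 0) hd_P (fun t _ => hpp0 t)
  have hBPmono : MonotoneOn (fun t => (F 0 + A t - F t) - P t) (Set.Ici (0:ℝ)) := by
    refine auxP_monoOn (convex_Ici 0)
      (fun t => (((hd_A t).const_add (F 0)).sub (hd_F t)).sub (hd_P t)) (fun t ht => ?_)
    rw [interior_Ici] at ht
    rw [hF' t ht.le]
    have h1 := hff0 t
    simp only [hppdef]
    linarith
  have hPb : ∀ t : ℝ, 0 ≤ t → P t ≤ F 0 + CA + R * Rz := by
    intro t ht
    have h1 : (F 0 + A 0 - F 0) - P 0 ≤ (F 0 + A t - F t) - P t :=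
      hBPmono (Set.self_mem_Ici) ht ht
    rw [hA0, hP0] at h1
    have h2 := hAb t ht
    have h3 := hFlb t ht
    linarith
  obtain ⟨lP, hlP⟩ := auxP_mono_tendsto hPmono hPb
  -- Barbalat: pp tends to zero
  have hpplim : Tendsto pp atTop (nhds 0) := by
    refine auxP_barbalat (M := MH * R * Rz + 1) (by positivity) hpp0 hd_pp
      (fun t ht => ?_) hd_P hlP
    have := hppb' t ht
    linarith
  -- conclude : hh1 + α * hh tends to l1 + lA
  have hode : Tendsto (fun t => hh1 t + α * hh t) atTop (nhds (l1 + lA)) := by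
    have h1 : Tendsto (fun t => F t - β * pp t) atTop (nhds ((l1 + lA) - β * 0)) :=
      hFlim.sub (hpplim.const_mul β)
    have h2 : (fun t => F t - β * pp t) = fun t => hh1 t + α * hh t := by
      funext t; simp only [hFdef]; ring
    rw [h2] at h1
    have h3 : (l1 + lA) - β * 0 = l1 + lA := by ring
    rwa [h3] at h1
  have hhlim : Tendsto hh atTop (nhds ((l1 + lA) / α)) := auxP_ode hα hd_hh hode
  -- finish : ‖x t - z‖ = sqrt (2 * hh t)
  refine ⟨Real.sqrt (2 * ((l1 + lA) / α)), ?_⟩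
  have h1 : Tendsto (fun t => Real.sqrt (2 * hh t)) atTop
      (nhds (Real.sqrt (2 * ((l1 + lA) / α)))) :=
    (Real.continuous_sqrt.tendsto _).comp (hhlim.const_mul 2)
  have h2 : (fun t => Real.sqrt (2 * hh t)) = fun t => ‖x t - z‖ := by
    funext t
    simp only [hhhdef, hdddef]
    rw [real_inner_self_eq_norm_sq]
    rw [show 2 * (‖x t - z‖ ^ 2 / 2) = ‖x t - z‖ ^ 2 by ring]
    exact Real.sqrt_sq (norm_nonneg _)
  rwa [h2] at h1
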